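/- Let y : Fin 4 → ℝ have all components positive, let gᵢⱼ(y) = (1 − 2δᵢⱼ)·√(y₁y₂y₃y₄)/(8·yᵢ·yⱼ), and let C^{m}_{jp}(y) = A^{m}_{jp}·yₘ/(yⱼ·y_p) with A^{m}_{jp} = (2δ^{m}_{j} + 2δ^{m}_{p} + 2δ_{jp} − 8δ^{m}_{j}δ_{jp} − 1)/8. Then the vertical covariant derivative of g with respect to the Cartan canonical connection vanishes: for all j, k, p ∈ {1,2,3,4}, ∂g_{jk}/∂y_p(y) = ∑_{m=1}^{4} g_{mk}(y)·C^{m}_{jp}(y) + ∑_{m=1}^{4} g_{jm}(y)·C^{m}_{kp}(y). -/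

import Mathlib

open scoped BigOperators

/-- Kronecker delta on `Fin 4`, valued in `ℝ`. -/
noncomputable def kd (i j : Fin 4) : ℝ := if i = j then 1 else 0

/-- The product `G(y) = y₁·y₂·y₃·y₄`. -/
noncomputable def Gfun (y : Fin 4 → ℝ) : ℝ := y 0 * y 1 * y 2 * y 3

/-- Partial derivative of `f` with respect to the `i`-th coordinate at `y`. -/
noncomputable def pd (f : (Fin 4 → ℝ) → ℝ) (i : Fin 4) (y : Fin 4 → ℝ) : ℝ :=
  fderiv ℝ f y (Pi.single i 1)

/-- Fundamental metrical tensor of the Berwald-Moór metric. -/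
noncomputable def gBM (y : Fin 4 → ℝ) (i j : Fin 4) : ℝ :=
  (1 - 2 * kd i j) * Real.sqrt (Gfun y) / (8 * y i * y j)

/-- Inverse of the fundamental metrical tensor of the Berwald-Moór metric. -/
noncomputable def gBMinv (y : Fin 4 → ℝ) (j k : Fin 4) : ℝ :=
  2 * (1 - 2 * kd j k) * y j * y k / Real.sqrt (Gfun y)

/-- The constants `A^i_{jk}`. -/
noncomputable def Acoef (i j k : Fin 4) : ℝ :=
  (2 * kd i j + 2 * kd i k + 2 * kd j k - 8 * kd i j * kd j k - 1) / 8

/-- Vertical Cartan coefficients `C^i_{jk}(y) = A^i_{jk}·yᵢ/(yⱼ·y_k)`. -/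
noncomputable def CBM (y : Fin 4 → ℝ) (i j k : Fin 4) : ℝ :=
  Acoef i j k * y i / (y j * y k)


lemma pd_gBM (y : Fin 4 → ℝ) (hy : ∀ i, 0 < y i) (j k p : Fin 4) :
    pd (fun z => gBM z j k) p y
      = (1 - 2 * kd j k) * Real.sqrt (Gfun y)
          * (1 / (2 * y p) - kd j p / y p - kd k p / y p) / (8 * y j * y k) := by
  have hG : 0 < Gfun y := by
    unfold Gfun; have := hy 0; have := hy 1; have := hy 2; have := hy 3; positivity
  have hproj : ∀ i : Fin 4, HasFDerivAt (fun z : Fin 4 → ℝ => z i)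
      (ContinuousLinearMap.proj i : (Fin 4 → ℝ) →L[ℝ] ℝ) y :=
    fun i => (ContinuousLinearMap.proj i : (Fin 4 → ℝ) →L[ℝ] ℝ).hasFDerivAt
  have hGd := (((hproj 0).mul (hproj 1)).mul (hproj 2)).mul (hproj 3)
  have hsqrt := (Real.hasDerivAt_sqrt hG.ne').comp_hasFDerivAt y hGd
  have hnum := hsqrt.const_mul (1 - 2 * kd j k)
  have hden := ((hproj j).const_mul (8:ℝ)).mul (hproj k)
  have hdnz : (8:ℝ) * y j * y k ≠ 0 := by have := hy j; have := hy k; positivity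
  have hinv := (hasDerivAt_inv hdnz).comp_hasFDerivAt y hden
  have hmain : HasFDerivAt (fun z : Fin 4 → ℝ => gBM z j k) _ y := hnum.mul hinv
  simp only [pd]
  rw [hmain.fderiv]
  simp only [ContinuousLinearMap.add_apply, ContinuousLinearMap.smul_apply,
    ContinuousLinearMap.coe_smul', Pi.smul_apply, ContinuousLinearMap.proj_apply,
    Pi.single_apply, smul_eq_mul, Function.comp_apply, Pi.mul_apply]
  have h1 : ((y 0 * y 1 * y 2 * if (3:Fin 4) = p then (1:ℝ) else 0) +
      y 3 * ((y 0 * y 1 * if (2:Fin 4) = p then (1:ℝ) else 0) +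
        y 2 * ((y 0 * if (1:Fin 4) = p then (1:ℝ) else 0) +
          y 1 * if (0:Fin 4) = p then (1:ℝ) else 0))) = Gfun y / y p := by
    have h0 := (hy p).ne'
    unfold Gfun
    fin_cases p <;> simp at h0 ⊢ <;> field_simp [Gfun] <;> ring
  rw [h1]
  have hsp : 0 < Real.sqrt (Gfun y) := Real.sqrt_pos.mpr hG
  set s := Real.sqrt (Gfun y) with hs
  have hG2 : Gfun y = s * s := (Real.mul_self_sqrt hG.le).symm
  rw [hG2]
  have hj := (hy j).ne'
  have hk := (hy k).ne'
  have hp := (hy p).ne'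
  have kd_self : ∀ i : Fin 4, kd i i = 1 := fun i => if_pos rfl
  have kd_of_ne : ∀ {a b : Fin 4}, a ≠ b → kd a b = 0 := fun h => if_neg h
  rcases eq_or_ne j p with rfl | hjp
  · rcases eq_or_ne k j with rfl | hkp
    · simp only [kd_self, if_pos rfl, ↓reduceIte]; field_simp; ring
    · simp only [kd_self, kd_of_ne hkp, kd_of_ne (Ne.symm hkp), if_pos rfl, if_neg hkp, ↓reduceIte]
      field_simp; ring
  · rcases eq_or_ne k p with rfl | hkp
    · simp only [kd_self, kd_of_ne hjp, kd_of_ne (Ne.symm hjp), if_pos rfl, if_neg hjp, ↓reduceIte]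
      field_simp; ring
    · simp only [kd_of_ne hjp, kd_of_ne hkp, if_neg hjp, if_neg hkp]
      generalize kd j k = c
      field_simp; ring

set_option maxHeartbeats 1000000 in
lemma sum_id (j k p : Fin 4) :
    (∑ m, (1 - 2 * kd m k) * Acoef m j p) + (∑ m, (1 - 2 * kd j m) * Acoef m k p)
      = (1 - 2 * kd j k) * (1/2 - kd j p - kd k p) := by
  fin_cases j <;> fin_cases k <;> fin_cases p <;>
    norm_num +decide [kd, Acoef, Fin.sum_univ_four]

/-- vertical metricity of the Cartan connection: g_{jk}|_{(p)} = 0. -/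
theorem berwald_moor_vertical_metricity
    (y : Fin 4 → ℝ) (hy : ∀ i, 0 < y i) (j k p : Fin 4) :
    pd (fun z => gBM z j k) p y
      = (∑ m, gBM y m k * CBM y m j p) + ∑ m, gBM y j m * CBM y m k p := by
  have hj := (hy j).ne'
  have hk := (hy k).ne'
  have hp := (hy p).ne'
  rw [pd_gBM y hy j k p]
  have hterm1 : ∀ m : Fin 4, gBM y m k * CBM y m j p
      = (1 - 2 * kd m k) * Acoef m j p * (Real.sqrt (Gfun y) / (8 * y j * y k * y p)) := by
    intro m
    have hm := (hy m).ne'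
    unfold gBM CBM
    field_simp
  have hterm2 : ∀ m : Fin 4, gBM y j m * CBM y m k p
      = (1 - 2 * kd j m) * Acoef m k p * (Real.sqrt (Gfun y) / (8 * y j * y k * y p)) := by
    intro m
    have hm := (hy m).ne'
    unfold gBM CBM
    field_simp
  simp only [hterm1, hterm2, ← Finset.sum_mul]
  rw [← add_mul, sum_id j k p]
  generalize kd j k = a
  generalize kd j p = b
  generalize kd k p = c
  field_simp
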